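/- Let α be a real number with 1/2 ≤ α < 1, let x ≥ 2 be a real number, and let k be a natural number such that 2 ≤ x^(2^{−k}) (real power). Then ∑_{i=0}^{k} x^(1 − (1−α)·2^{−i}) ≤ (2/(1−α))·x. (This bounds the total length of all ID arrays of an ideal Interpolation Search Tree with parameter α over all its levels, completing the O(n) space bound of Theorem 1.) -/

import Mathlib

theorem ist_total_id_length_le (α : ℝ) (hα : 1 / 2 ≤ α) (hα1 : α < 1)
    (x : ℝ) (hx : 2 ≤ x) (k : ℕ) (hk : 2 ≤ x ^ (((2 : ℝ) ^ k)⁻¹)) :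
    ∑ i ∈ Finset.range (k + 1), x ^ (1 - (1 - α) * ((2 : ℝ) ^ i)⁻¹) ≤
      (2 / (1 - α)) * x := by
  have hx0 : (0:ℝ) < x := lt_of_lt_of_le two_pos hx
  set β : ℝ := 1 - α with hβdef
  have hβ0 : 0 < β := by simp [hβdef]; linarith
  have hβ2 : β ≤ 1/2 := by simp [hβdef]; linarith
  set r : ℝ := (2:ℝ) ^ (-β) with hrdef
  have hr0 : (0:ℝ) < r := Real.rpow_pos_of_pos two_pos _
  have hr1 : r < 1 := Real.rpow_lt_one_of_one_lt_of_neg one_lt_two (by linarith)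
  -- key term bound
  have key : ∀ i ∈ Finset.range (k+1),
      x ^ (1 - β * ((2:ℝ)^i)⁻¹) ≤ x * r ^ (k - i + 1) := by
    intro i hi
    have hik : i ≤ k := Nat.lt_succ_iff.mp (Finset.mem_range.mp hi)
    have h1 : x ^ (1 - β * ((2:ℝ)^i)⁻¹) = x * x ^ (-(β * ((2:ℝ)^i)⁻¹)) := by
      rw [sub_eq_add_neg, Real.rpow_add hx0, Real.rpow_one]
    rw [h1]
    gcongr
    -- show x ^ (-(β * 2^{-i})) ≤ r ^ (k-i+1)
    have hpow : (2:ℝ)^(k-i) * (2:ℝ)^i = (2:ℝ)^k := by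
      rw [← pow_add, Nat.sub_add_cancel hik]
    have hm : ((2:ℝ)^k)⁻¹ * ((2:ℕ)^(k-i) : ℕ) = ((2:ℝ)^i)⁻¹ := by
      push_cast
      rw [← hpow]
      rw [mul_inv]
      field_simp
    have hx2 : x ^ (((2:ℝ)^i)⁻¹) = (x ^ (((2:ℝ)^k)⁻¹)) ^ ((2:ℕ)^(k-i)) := by
      rw [← Real.rpow_natCast (x ^ (((2:ℝ)^k)⁻¹)), ← Real.rpow_mul hx0.le, hm]
    have hlow : (2:ℝ) ^ ((2:ℕ)^(k-i)) ≤ x ^ (((2:ℝ)^i)⁻¹) := by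
      rw [hx2]
      exact pow_le_pow_left₀ (by norm_num) hk _
    have hpos2 : (0:ℝ) < (2:ℝ) ^ ((2:ℕ)^(k-i)) := by positivity
    have step1 : x ^ (-(β * ((2:ℝ)^i)⁻¹)) ≤ ((2:ℝ) ^ ((2:ℕ)^(k-i))) ^ (-β) := by
      have : x ^ (-(β * ((2:ℝ)^i)⁻¹)) = (x ^ (((2:ℝ)^i)⁻¹)) ^ (-β) := by
        rw [← Real.rpow_mul hx0.le]
        ring_nf
      rw [this]
      exact Real.rpow_le_rpow_of_nonpos hpos2 hlow (by linarith)
    refine step1.trans ?_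
    have hcast : ((2:ℝ) ^ ((2:ℕ)^(k-i))) ^ (-β) = (2:ℝ) ^ ((((2:ℕ)^(k-i) : ℕ) : ℝ) * (-β)) := by
      rw [← Real.rpow_natCast (2:ℝ) ((2:ℕ)^(k-i)), ← Real.rpow_mul (by norm_num)]
    have hcast2 : r ^ (k - i + 1) = (2:ℝ) ^ (((k - i + 1 : ℕ) : ℝ) * (-β)) := by
      rw [hrdef, ← Real.rpow_natCast ((2:ℝ)^(-β)), ← Real.rpow_mul (by norm_num)]
      ring_nf
    rw [hcast, hcast2]
    apply Real.rpow_le_rpow_of_exponent_le one_le_two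
    have hnat : (k - i + 1 : ℕ) ≤ (2:ℕ)^(k-i) := Nat.lt_two_pow_self (n := k-i)
    exact mul_le_mul_of_nonpos_right (by exact_mod_cast hnat) (by linarith)
  calc ∑ i ∈ Finset.range (k + 1), x ^ (1 - β * ((2:ℝ)^i)⁻¹)
      ≤ ∑ i ∈ Finset.range (k + 1), x * r ^ (k - i + 1) :=
        Finset.sum_le_sum key
    _ = x * ∑ i ∈ Finset.range (k + 1), r ^ (k - i + 1) := by
        rw [Finset.mul_sum]
    _ = x * ∑ j ∈ Finset.range (k + 1), r ^ (j + 1) := by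
        congr 1
        rw [← Finset.sum_range_reflect (fun j => r ^ (j + 1)) (k + 1)]
        apply Finset.sum_congr rfl
        intro i hi
        have hik : i ≤ k := Nat.lt_succ_iff.mp (Finset.mem_range.mp hi)
        congr 1
    _ ≤ x * (r / (1 - r)) := by
        gcongr x * ?_
        have hsum : ∑ j ∈ Finset.range (k + 1), r ^ (j + 1)
            = r * ∑ j ∈ Finset.range (k + 1), r ^ j := by
          rw [Finset.mul_sum]
          apply Finset.sum_congr rfl
          intro j _
          ring
        have h1r : (0:ℝ) < 1 - r := by linarith
        have hS : ∑ j ∈ Finset.range (k + 1), r ^ j ≤ (1 - r)⁻¹ := by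
          rw [geom_sum_eq (ne_of_lt hr1) (k+1)]
          have heq : (r^(k+1) - 1)/(r - 1) = (1 - r^(k+1))/(1 - r) := by
            rw [← neg_div_neg_eq]; ring_nf
          rw [heq, inv_eq_one_div]
          gcongr
          nlinarith [pow_nonneg hr0.le (k+1)]
        rw [hsum, div_eq_mul_inv]
        exact mul_le_mul_of_nonneg_left hS hr0.le
    _ ≤ x * (2 / β) := by
        have h2βpos : (0:ℝ) < (2:ℝ)^β := Real.rpow_pos_of_pos two_pos β
        have h2β : 1 + β/2 ≤ (2:ℝ)^β := by
          have hlog : (1:ℝ)/2 ≤ Real.log 2 := by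
            have := Real.log_two_gt_d9; linarith
          have hexp := Real.add_one_le_exp (β * Real.log 2)
          rw [Real.rpow_def_of_pos two_pos, mul_comm (Real.log 2) β]
          nlinarith
        have hr_eq : r = ((2:ℝ)^β)⁻¹ := by
          rw [hrdef, Real.rpow_neg two_pos.le]
        have hinvpos : (0:ℝ) < ((2:ℝ)^β)⁻¹ := by positivity
        have key2 : r/(1-r) ≤ 2/β := by
          rw [div_le_div_iff₀ (by linarith) hβ0, hr_eq]
          nlinarith [mul_inv_cancel₀ (ne_of_gt h2βpos), hinvpos]
        gcongr
    _ = (2 / β) * x := by ring
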